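/- Let P be a row-stochastic matrix with stationary distribution ν such that ‖(I − P + 1νᵀ)^{-1}‖_∞ ≤ 2 t_mix, and let r ∈ [0,1]^S with v̄ := νᵀr. Then the vector v* := (I − P + 1νᵀ)^{-1}(r − v̄·1) satisfies νᵀv* = 0, (I − P)v* = r − v̄·1, and ‖v*‖_∞ ≤ 2 t_mix. -/
import Mathlib


open Finset

/-- ℓ∞ norm of a vector over a nonempty fintype. -/
noncomputable def linf {S : Type*} [Fintype S] [Nonempty S] (v : S → ℝ) : ℝ :=
  Finset.univ.sup' Finset.univ_nonempty (fun i => |v i|)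

/-- Operator ∞-norm of a matrix: maximum absolute row sum. -/
noncomputable def matNormInf {S : Type*} [Fintype S] [Nonempty S] (A : Matrix S S ℝ) : ℝ :=
  Finset.univ.sup' Finset.univ_nonempty (fun i => ∑ j, |A i j|)

theorem stmt4 {S : Type*} [Fintype S] [DecidableEq S] [Nonempty S]
    (P : Matrix S S ℝ) (hPnn : ∀ i j, 0 ≤ P i j) (hProw : ∀ i, ∑ j, P i j = 1)
    (ν : S → ℝ) (hνnn : ∀ i, 0 ≤ ν i) (hνsum : ∑ i, ν i = 1)
    (hstat : ∀ j, ∑ i, ν i * P i j = ν j)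
    (tmix : ℕ) (htmix : 0 < tmix)
    (B : Matrix S S ℝ)
    (hB1 : (1 - P + Matrix.of (fun _ j => ν j)) * B = 1)
    (hB2 : B * (1 - P + Matrix.of (fun _ j => ν j)) = 1)
    (hBnorm : matNormInf B ≤ 2 * tmix)
    (r : S → ℝ) (hr : ∀ i, 0 ≤ r i ∧ r i ≤ 1)
    (vbar : ℝ) (hvbar : vbar = ∑ i, ν i * r i)
    (vstar : S → ℝ) (hvstar : vstar = B.mulVec (fun i => r i - vbar)) :
    (∑ i, ν i * vstar i = 0) ∧
    ((1 - P).mulVec vstar = fun i => r i - vbar) ∧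
    linf vstar ≤ 2 * tmix := by
  set A : Matrix S S ℝ := 1 - P + Matrix.of (fun _ j => ν j) with hA
  -- νᵀ A = νᵀ
  have hνA : ∀ j, ∑ i, ν i * A i j = ν j := by
    intro j
    have : ∀ i, ν i * A i j = (if i = j then ν i else 0) - ν i * P i j + ν i * ν j := by
      intro i
      simp [hA, Matrix.sub_apply, Matrix.add_apply, Matrix.one_apply, Matrix.of_apply]
      by_cases h : i = j <;> simp [h] <;> ring
    rw [Finset.sum_congr rfl (fun i _ => this i)]
    rw [Finset.sum_add_distrib, Finset.sum_sub_distrib, Finset.sum_ite_eq' univ j ν]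
    simp [hstat j, ← Finset.sum_mul, hνsum]
  -- νᵀ B = νᵀ
  have hνB : ∀ k, ∑ i, ν i * B i k = ν k := by
    intro k
    calc ∑ i, ν i * B i k = ∑ i, (∑ l, ν l * A l i) * B i k := by
          refine Finset.sum_congr rfl fun i _ => by rw [hνA i]
      _ = ∑ i, ∑ l, ν l * (A l i * B i k) := by
          refine Finset.sum_congr rfl fun i _ => by
            rw [Finset.sum_mul]
            exact Finset.sum_congr rfl fun l _ => by ring
      _ = ∑ l, ν l * ∑ i, A l i * B i k := by
          rw [Finset.sum_comm]
          exact Finset.sum_congr rfl fun l _ => (Finset.mul_sum _ _ _).symm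
      _ = ∑ l, ν l * (1 : Matrix S S ℝ) l k := by
          refine Finset.sum_congr rfl fun l _ => by
            rw [← hB1]; rfl
      _ = ν k := by simp [Matrix.one_apply]
  -- part 1
  have h1 : ∑ i, ν i * vstar i = 0 := by
    have : ∑ i, ν i * vstar i = ∑ j, (∑ i, ν i * B i j) * (r j - vbar) := by
      rw [hvstar]
      simp only [Matrix.mulVec, dotProduct, Finset.mul_sum, Finset.sum_mul]
      rw [Finset.sum_comm]
      exact Finset.sum_congr rfl fun j _ => Finset.sum_congr rfl fun i _ => by ring
    rw [this]
    have : ∑ j, (∑ i, ν i * B i j) * (r j - vbar) = ∑ j, ν j * (r j - vbar) := by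
      refine Finset.sum_congr rfl fun j _ => by rw [hνB j]
    rw [this]
    simp only [mul_sub]
    rw [Finset.sum_sub_distrib, ← hvbar, ← Finset.sum_mul, hνsum]
    ring
  -- part 2
  have hAv : A.mulVec vstar = fun i => r i - vbar := by
    rw [hvstar, Matrix.mulVec_mulVec, hB1, Matrix.one_mulVec]
  have h2 : (1 - P).mulVec vstar = fun i => r i - vbar := by
    funext i
    have hadd : A.mulVec vstar i = (1 - P).mulVec vstar i
        + (Matrix.of (fun _ j => ν j)).mulVec vstar i := by
      rw [hA, Matrix.add_mulVec]; rfl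
    have hzero : (Matrix.of (fun _ j => ν j)).mulVec vstar i = 0 := by
      simpa [Matrix.mulVec, dotProduct] using h1
    have := congrFun hAv i
    rw [hadd, hzero, add_zero] at this
    exact this
  refine ⟨h1, h2, ?_⟩
  -- part 3
  have hvbar0 : 0 ≤ vbar := by
    rw [hvbar]; exact Finset.sum_nonneg fun i _ => mul_nonneg (hνnn i) (hr i).1
  have hvbar1 : vbar ≤ 1 := by
    rw [hvbar, ← hνsum]
    exact Finset.sum_le_sum fun i _ => by
      nlinarith [(hr i).2, hνnn i]
  have hbound : ∀ i, |vstar i| ≤ 2 * tmix := by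
    intro i
    have h1' : |vstar i| ≤ ∑ j, |B i j| * |r j - vbar| := by
      rw [hvstar]
      simp only [Matrix.mulVec, dotProduct]
      calc |∑ j, B i j * (r j - vbar)| ≤ ∑ j, |B i j * (r j - vbar)| :=
            Finset.abs_sum_le_sum_abs _ _
        _ = ∑ j, |B i j| * |r j - vbar| := by
            refine Finset.sum_congr rfl fun j _ => abs_mul _ _
    have h2' : ∑ j, |B i j| * |r j - vbar| ≤ ∑ j, |B i j| := by
      refine Finset.sum_le_sum fun j _ => ?_
      have : |r j - vbar| ≤ 1 := by
        rw [abs_le]; constructor <;> nlinarith [(hr j).1, (hr j).2]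
      nlinarith [abs_nonneg (B i j)]
    have h3' : ∑ j, |B i j| ≤ matNormInf B :=
      Finset.le_sup' (fun i => ∑ j, |B i j|) (Finset.mem_univ i)
    linarith
  exact Finset.sup'_le _ _ fun i _ => hbound i
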